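/- Let H be a complex Hilbert space and let T be a bounded linear operator on H with Cartesian components T_H = (T + T*)/2 and T_S = (T − T*)/(2i). Define η₁ = max{ |‖T_H + T_S‖ − ‖T_H‖| , |‖T_H − T_S‖ − ‖T_H‖| } and η₂ = max{ |‖T_H + T_S‖ − ‖T_S‖| , |‖T_H − T_S‖ − ‖T_S‖| }, where ‖·‖ is the operator norm. Then for every unit vector u in H, |⟨Tu, u⟩|² ≤ max{ η₁² + ‖T_H‖² , η₂² + ‖T_S‖² }; in particular the numerical radius w(T) = sup_{‖u‖=1} |⟨Tu, u⟩| satisfies w(T) ≤ ( max{ η₁² + ‖T_H‖² , η₂² + ‖T_S‖² } )^{1/2}. -/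

import Mathlib

open scoped ComplexInnerProductSpace

lemma core_octagon (a b p q s η₁ η₂ : ℝ) (ha : 0 ≤ a) (hb : 0 ≤ b)
    (hap : a ≤ p) (hbq : b ≤ q) (habs : a + b ≤ s)
    (h1 : |s - p| ≤ η₁) (h2 : |s - q| ≤ η₂) :
    a ^ 2 + b ^ 2 ≤ max (η₁ ^ 2 + p ^ 2) (η₂ ^ 2 + q ^ 2) := by
  rw [abs_le] at h1 h2
  rcases le_or_gt b η₁ with hb1 | hb1
  · exact le_max_of_le_left (by nlinarith)
  rcases le_or_gt a η₂ with ha2 | ha2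
  · exact le_max_of_le_right (by nlinarith)
  rcases le_or_gt s (2 * b) with hs | hs
  · refine le_max_of_le_right ?_
    nlinarith [sq_nonneg (q - b), sq_nonneg (s - b - a)]
  · refine le_max_of_le_left ?_
    nlinarith [sq_nonneg (b - η₁), sq_nonneg (s - b - a)]

lemma core_octagon' (a b p q s d η₁ η₂ : ℝ)
    (hap : |a| ≤ p) (hbq : |b| ≤ q) (hs : |a + b| ≤ s) (hd : |a - b| ≤ d)
    (h1s : |s - p| ≤ η₁) (h1d : |d - p| ≤ η₁)
    (h2s : |s - q| ≤ η₂) (h2d : |d - q| ≤ η₂) :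
    a ^ 2 + b ^ 2 ≤ max (η₁ ^ 2 + p ^ 2) (η₂ ^ 2 + q ^ 2) := by
  have ha' : |a| ^ 2 = a ^ 2 := sq_abs a
  have hb' : |b| ^ 2 = b ^ 2 := sq_abs b
  rw [← ha', ← hb']
  rcases le_or_gt 0 a with ha | ha <;> rcases le_or_gt 0 b with hb | hb
  · exact core_octagon _ _ _ _ s _ _ (abs_nonneg a) (abs_nonneg b) hap hbq
      (by rw [abs_of_nonneg ha, abs_of_nonneg hb]; exact (le_abs_self _).trans hs) h1s h2s
  · exact core_octagon _ _ _ _ d _ _ (abs_nonneg a) (abs_nonneg b) hap hbq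
      (by rw [abs_of_nonneg ha, abs_of_neg hb]; exact (le_abs_self _).trans hd) h1d h2d
  · exact core_octagon _ _ _ _ d _ _ (abs_nonneg a) (abs_nonneg b) hap hbq
      (by rw [abs_of_neg ha, abs_of_nonneg hb]; linarith [(neg_le_abs (a-b)).trans hd]) h1d h2d
  · exact core_octagon _ _ _ _ s _ _ (abs_nonneg a) (abs_nonneg b) hap hbq
      (by rw [abs_of_neg ha, abs_of_neg hb]; linarith [(neg_le_abs (a+b)).trans hs]) h1s h2s

/-- With `η₁ = max{|‖T_H+T_S‖−‖T_H‖|, |‖T_H−T_S‖−‖T_H‖|}` and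
`η₂ = max{|‖T_H+T_S‖−‖T_S‖|, |‖T_H−T_S‖−‖T_S‖|}`, for every unit vector `u` one has
`|⟨Tu,u⟩|² ≤ max{η₁² + ‖T_H‖², η₂² + ‖T_S‖²}`, and consequently the numerical radius
satisfies `w(T) ≤ (max{η₁² + ‖T_H‖², η₂² + ‖T_S‖²})^{1/2}`. -/
theorem numericalRadius_le_octagon_bound
    {H : Type*} [NormedAddCommGroup H] [InnerProductSpace ℂ H] [CompleteSpace H]
    (T TH TS : H →L[ℂ] H)
    (hTH : TH = (2 : ℂ)⁻¹ • (T + ContinuousLinearMap.adjoint T))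
    (hTS : TS = (2 * Complex.I)⁻¹ • (T - ContinuousLinearMap.adjoint T))
    (η₁ η₂ : ℝ)
    (hη₁ : η₁ = max |‖TH + TS‖ - ‖TH‖| |‖TH - TS‖ - ‖TH‖|)
    (hη₂ : η₂ = max |‖TH + TS‖ - ‖TS‖| |‖TH - TS‖ - ‖TS‖|) :
    (∀ u : H, ‖u‖ = 1 →
        ‖(⟪u, T u⟫ : ℂ)‖ ^ 2 ≤ max (η₁ ^ 2 + ‖TH‖ ^ 2) (η₂ ^ 2 + ‖TS‖ ^ 2)) ∧
    sSup {r : ℝ | ∃ u : H, ‖u‖ = 1 ∧ r = ‖(⟪u, T u⟫ : ℂ)‖} ≤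
      Real.sqrt (max (η₁ ^ 2 + ‖TH‖ ^ 2) (η₂ ^ 2 + ‖TS‖ ^ 2)) := by
  have hTHsa : ContinuousLinearMap.adjoint TH = TH := by
    rw [hTH, map_smulₛₗ, map_add, ContinuousLinearMap.adjoint_adjoint]
    rw [show (starRingEnd ℂ) 2⁻¹ = 2⁻¹ by norm_num [Complex.ext_iff]]; module
  have hTSsa : ContinuousLinearMap.adjoint TS = TS := by
    rw [hTS, map_smulₛₗ, map_sub, ContinuousLinearMap.adjoint_adjoint]
    rw [show (starRingEnd ℂ) (2 * Complex.I)⁻¹ = -(2 * Complex.I)⁻¹ by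
      simp [Complex.ext_iff, Complex.inv_im, Complex.inv_re, Complex.normSq]]
    module
  have hT : T = TH + Complex.I • TS := by
    rw [hTH, hTS, smul_smul,
      show Complex.I * (2 * Complex.I)⁻¹ = (2:ℂ)⁻¹ by field_simp]
    module
  have real_inner : ∀ A : H →L[ℂ] H, ContinuousLinearMap.adjoint A = A → ∀ u : H,
      (⟪u, A u⟫ : ℂ) = ((⟪u, A u⟫ : ℂ).re : ℂ) := by
    intro A hA u
    refine (Complex.conj_eq_iff_re.mp ?_).symm
    rw [inner_conj_symm]
    conv_lhs => rw [← hA, ContinuousLinearMap.adjoint_inner_left]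
  have key : ∀ (A : H →L[ℂ] H) (u : H), ‖u‖ = 1 → ‖(⟪u, A u⟫ : ℂ)‖ ≤ ‖A‖ := by
    intro A u hu
    calc ‖(⟪u, A u⟫ : ℂ)‖ ≤ ‖u‖ * ‖A u‖ := norm_inner_le_norm _ _
      _ ≤ ‖u‖ * (‖A‖ * ‖u‖) := by gcongr; exact A.le_opNorm u
      _ = ‖A‖ := by rw [hu]; ring
  have main : ∀ u : H, ‖u‖ = 1 →
      ‖(⟪u, T u⟫ : ℂ)‖ ^ 2 ≤ max (η₁ ^ 2 + ‖TH‖ ^ 2) (η₂ ^ 2 + ‖TS‖ ^ 2) := by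
    intro u hu
    set a : ℝ := (⟪u, TH u⟫ : ℂ).re with ha_def
    set b : ℝ := (⟪u, TS u⟫ : ℂ).re with hb_def
    have hza : (⟪u, TH u⟫ : ℂ) = (a : ℂ) := real_inner TH hTHsa u
    have hzb : (⟪u, TS u⟫ : ℂ) = (b : ℂ) := real_inner TS hTSsa u
    have habs : ‖(⟪u, T u⟫ : ℂ)‖ ^ 2 = a ^ 2 + b ^ 2 := by
      have : (⟪u, T u⟫ : ℂ) = (a : ℂ) + Complex.I * (b : ℂ) := by
        rw [hT]
        simp only [ContinuousLinearMap.add_apply, ContinuousLinearMap.smul_apply,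
          inner_add_right, inner_smul_right, hza, hzb]
      rw [this, Complex.sq_norm, Complex.normSq_apply]
      simp
      ring
    have hap : |a| ≤ ‖TH‖ := by
      have := key TH u hu; rw [hza, Complex.norm_real] at this; exact this
    have hbq : |b| ≤ ‖TS‖ := by
      have := key TS u hu; rw [hzb, Complex.norm_real] at this; exact this
    have hsum : |a + b| ≤ ‖TH + TS‖ := by
      have := key (TH + TS) u hu
      rw [show (⟪u, (TH + TS) u⟫ : ℂ) = ((a + b : ℝ) : ℂ) by
        simp [ContinuousLinearMap.add_apply, inner_add_right, hza, hzb], Complex.norm_real] at this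
      exact this
    have hdiff : |a - b| ≤ ‖TH - TS‖ := by
      have := key (TH - TS) u hu
      rw [show (⟪u, (TH - TS) u⟫ : ℂ) = ((a - b : ℝ) : ℂ) by
        simp [ContinuousLinearMap.sub_apply, inner_sub_right, hza, hzb], Complex.norm_real] at this
      exact this
    rw [habs]
    exact core_octagon' a b ‖TH‖ ‖TS‖ ‖TH + TS‖ ‖TH - TS‖ η₁ η₂ hap hbq hsum hdiff
      (hη₁ ▸ le_max_left _ _) (hη₁ ▸ le_max_right _ _)
      (hη₂ ▸ le_max_left _ _) (hη₂ ▸ le_max_right _ _)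
  refine ⟨main, Real.sSup_le ?_ (Real.sqrt_nonneg _)⟩
  rintro r ⟨u, hu, rfl⟩
  have h1 := main u hu
  calc ‖(⟪u, T u⟫ : ℂ)‖
      = Real.sqrt (‖(⟪u, T u⟫ : ℂ)‖ ^ 2) := by
        rw [Real.sqrt_sq (norm_nonneg _)]
    _ ≤ Real.sqrt (max (η₁ ^ 2 + ‖TH‖ ^ 2) (η₂ ^ 2 + ‖TS‖ ^ 2)) := Real.sqrt_le_sqrt h1
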